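/- Let G = (S, C, R) be a reaction network with a set of intermediate species Y ⊆ S, let G* = (S*, C*, R*) be the reduction of G by removal of Y, and set X := (S∖Y)∖S*. If Σ is a siphon of G, then Σ* := Σ ∩ S* is either empty or a siphon of G*. Furthermore, if Σ* is empty, then Σ ∩ X is nonempty. -/

import Mathlib

/-- A reaction network: a finite set of species, a finite set of complexes
(nonnegative vectors supported on the species), and a finite set of reactions
(a digraph on the complexes with no self-loops), such that every complex takes
part in some reaction and every species is part of some complex. -/
structure RN (ι : Type) where
  species : Finset ι
  complexes : Finset (ι → ℝ)
  reactions : Finset ((ι → ℝ) × (ι → ℝ))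
  complexes_nonneg : ∀ y ∈ complexes, ∀ i, 0 ≤ y i
  complexes_supp : ∀ y ∈ complexes, ∀ i, y i ≠ 0 → i ∈ species
  react_mem_fst : ∀ r ∈ reactions, r.1 ∈ complexes
  react_mem_snd : ∀ r ∈ reactions, r.2 ∈ complexes
  no_loops : ∀ r ∈ reactions, r.1 ≠ r.2
  complexes_used : ∀ y ∈ complexes, ∃ r ∈ reactions, r.1 = y ∨ r.2 = y
  species_used : ∀ i ∈ species, ∃ y ∈ complexes, y i ≠ 0

namespace RN

variable {ι : Type}

/-- A siphon: a nonempty set of species such that every reaction having a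
product species in it also has a reactant species in it. -/
def IsSiphon (G : RN ι) (T : Set ι) : Prop :=
  T.Nonempty ∧ T ⊆ ↑G.species ∧
    ∀ r ∈ G.reactions, (∃ i ∈ T, 0 < r.2 i) → ∃ i ∈ T, 0 < r.1 i

/-- A minimal siphon: a siphon not properly containing any other siphon. -/
def MinimalSiphon (G : RN ι) (T : Set ι) : Prop :=
  G.IsSiphon T ∧ ∀ T' : Set ι, G.IsSiphon T' → T' ⊆ T → T' = T

/-- A nonempty set of species is drainable if some finite sequence of reactions
(with repetitions allowed) strictly decreases every one of its coordinates. -/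
def Drainable (G : RN ι) (T : Set ι) : Prop :=
  T.Nonempty ∧ T ⊆ ↑G.species ∧
    ∃ L : List ((ι → ℝ) × (ι → ℝ)), (∀ r ∈ L, r ∈ G.reactions) ∧
      ∀ i ∈ T, (L.map (fun r => r.2 i - r.1 i)).sum < 0

/-- A nonempty set of species is self-replicable if some finite sequence of
reactions (with repetitions allowed) strictly increases every one of its
coordinates. -/
def SelfReplicable (G : RN ι) (T : Set ι) : Prop :=
  T.Nonempty ∧ T ⊆ ↑G.species ∧
    ∃ L : List ((ι → ℝ) × (ι → ℝ)), (∀ r ∈ L, r ∈ G.reactions) ∧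
      ∀ i ∈ T, 0 < (L.map (fun r => r.2 i - r.1 i)).sum

/-- A P-semiflow: a nonzero nonnegative vector supported on the species with
ωᵀN = 0, i.e. ω · (y' - y) = 0 for every reaction y → y'. -/
def IsPSemiflow (G : RN ι) (ω : ι → ℝ) : Prop :=
  (∀ i, 0 ≤ ω i) ∧ (∀ i, ω i ≠ 0 → i ∈ G.species) ∧ ω ≠ 0 ∧
    ∀ r ∈ G.reactions, ∑ i ∈ G.species, ω i * (r.2 i - r.1 i) = 0

/-- The siphon/P-semiflow property: every siphon contains the support of a
P-semiflow. -/
def SiphonPSemiflowProperty (G : RN ι) : Prop :=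
  ∀ T : Set ι, G.IsSiphon T → ∃ ω : ι → ℝ, G.IsPSemiflow ω ∧ {i | 0 < ω i} ⊆ T

/-- Consistency: there is a strictly positive T-semiflow, i.e. strictly
positive reaction weights v with N v = 0. -/
def Consistent (G : RN ι) : Prop :=
  ∃ v : ((ι → ℝ) × (ι → ℝ)) → ℝ, (∀ r ∈ G.reactions, 0 < v r) ∧
    ∀ i : ι, ∑ r ∈ G.reactions, v r * (r.2 i - r.1 i) = 0

/-- Conservativity: there is a strictly positive conservation law ω ≫ 0 with
ωᵀN = 0. -/
def Conservative (G : RN ι) : Prop :=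
  ∃ ω : ι → ℝ, (∀ i ∈ G.species, 0 < ω i) ∧
    ∀ r ∈ G.reactions, ∑ i ∈ G.species, ω i * (r.2 i - r.1 i) = 0

/-- A directed reaction path from `y` to `y'` all of whose non-endpoint
complexes lie in the set `A`. -/
def PathThrough (G : RN ι) (A : Set (ι → ℝ)) (y y' : ι → ℝ) : Prop :=
  ∃ L : List (ι → ℝ), (∀ z ∈ L, z ∈ A) ∧
    List.Chain (fun a b => (a, b) ∈ G.reactions) y (L ++ [y'])

end RN

variable {ι : Type}

/-- The complex consisting of the single species `j` (with unit coefficient),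
for `j` in the given set. -/
def InterCplx [DecidableEq ι] (Y : Finset ι) (z : ι → ℝ) : Prop :=
  ∃ j ∈ Y, z = Pi.single j 1

/-- The complex `z` is supported off the set `Y`. -/
def OffSet (Y : Finset ι) (z : ι → ℝ) : Prop := ∀ j ∈ Y, z j = 0

namespace RN

/-- `Y` is a set of intermediate species of `G`: (I1) every complex is either
supported off `Y` or equals a single species of `Y` with unit coefficient;
(I2) every `Y`-complex is connected to non-intermediate complexes by directed
reaction paths, in both directions, all of whose non-endpoints are
intermediates. -/
def IsIntermediateSet [DecidableEq ι] (G : RN ι) (Y : Finset ι) : Prop :=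
  Y.Nonempty ∧ Y ⊆ G.species ∧
    (∀ y ∈ G.complexes, OffSet Y y ∨ InterCplx Y y) ∧
    (∀ j ∈ Y, ∃ y ∈ G.complexes, ∃ y' ∈ G.complexes, OffSet Y y ∧ OffSet Y y' ∧
      G.PathThrough {z | InterCplx Y z} y (Pi.single j 1) ∧
      G.PathThrough {z | InterCplx Y z} (Pi.single j 1) y')

/-- `G'` is the reduction of `G` by removal of the set of intermediates `Y`:
its reactions are exactly the pairs `y → y'` of distinct non-intermediate
complexes of `G` joined by a directed reaction path all of whose non-endpoints
are intermediates (in particular all reactions of `G` between non-intermediate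
complexes). -/
def IsIntermediateReduction [DecidableEq ι] (G : RN ι) (Y : Finset ι) (G' : RN ι) : Prop :=
  ∀ p : (ι → ℝ) × (ι → ℝ), p ∈ G'.reactions ↔
    (p.1 ∈ G.complexes ∧ p.2 ∈ G.complexes ∧ OffSet Y p.1 ∧ OffSet Y p.2 ∧
      p.1 ≠ p.2 ∧ G.PathThrough {z | InterCplx Y z} p.1 p.2)

end RN

/-- The projection of a complex onto the coordinates outside `E` (the
coordinates in `E` are set to zero). -/
def projOff [DecidableEq ι] (E : Finset ι) (y : ι → ℝ) : ι → ℝ :=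
  fun i => if i ∈ E then 0 else y i

namespace RN

/-- `E` is a set of catalysts of `G`, with `GE` the subnetwork of `G` implied
by `E`: (C1) every reaction either leaves the `E`-coordinates untouched or is
supported entirely in `E`; `GE` consists of the reactions of `G` involving
only species of `E`; and (C2) `GE` has no drainable and no self-replicable
siphons. -/
def IsCatalystSet (G GE : RN ι) (E : Finset ι) : Prop :=
  E.Nonempty ∧ E ⊆ G.species ∧
    (∀ r ∈ G.reactions, (∀ i ∈ E, r.1 i = r.2 i) ∨ (∀ i, i ∉ E → r.1 i = 0 ∧ r.2 i = 0)) ∧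
    (∀ p : (ι → ℝ) × (ι → ℝ), p ∈ GE.reactions ↔
      (p ∈ G.reactions ∧ (∀ i, p.1 i ≠ 0 → i ∈ E) ∧ (∀ i, p.2 i ≠ 0 → i ∈ E))) ∧
    (∀ T : Set ι, GE.IsSiphon T → ¬ GE.Drainable T ∧ ¬ GE.SelfReplicable T)

/-- `G'` is the reduction of `G` by removal of the set of catalysts `E`: its
reactions are the projections off `E` of those reactions of `G` at least one
of whose projected sides is nonzero. -/
def IsCatalystReduction [DecidableEq ι] (G : RN ι) (E : Finset ι) (G' : RN ι) : Prop :=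
  ∀ p : (ι → ℝ) × (ι → ℝ), p ∈ G'.reactions ↔
    ∃ r ∈ G.reactions, p = (projOff E r.1, projOff E r.2) ∧
      (projOff E r.1 ≠ 0 ∨ projOff E r.2 ≠ 0)

/-- A monomolecular network: every complex is either zero or a single species
with unit coefficient. -/
def Monomolecular [DecidableEq ι] (G : RN ι) : Prop :=
  ∀ y ∈ G.complexes, y = 0 ∨ ∃ i ∈ G.species, y = Pi.single i 1

end RN

private lemma chain_siphon_aux {ι : Type} (G : RN ι) (T : Set ι)
    (hsi : ∀ r ∈ G.reactions, (∃ i ∈ T, 0 < r.2 i) → ∃ i ∈ T, 0 < r.1 i) :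
    ∀ (L : List (ι → ℝ)) (y w : ι → ℝ),
      List.Chain (fun a b => (a, b) ∈ G.reactions) y (L ++ [w]) →
      (∃ i ∈ T, 0 < w i) → ∃ i ∈ T, 0 < y i := by
  intro L
  induction L with
  | nil =>
    intro y w hc hw
    cases hc with
    | cons_cons hr _ => exact hsi (y, w) hr hw
  | cons z L ih =>
    intro y w hc hw
    cases hc with
    | cons_cons hr hc' => exact hsi (y, z) hr (ih z w hc' hw)

/-- Lemma 5: if `G'` is obtained from `G` by removal of a set of intermediates
`Y` and `Σ` is a siphon of `G`, then `Σ* := Σ ∩ S*` is either empty or a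
siphon of `G'`; furthermore, if `Σ*` is empty then `Σ ∩ X` is nonempty, where
`X := (S ∖ Y) ∖ S*`. -/
theorem siphon_restriction_after_intermediate_removal
    {ι : Type} [DecidableEq ι] (G G' : RN ι) (Y : Finset ι)
    (hY : G.IsIntermediateSet Y) (hred : G.IsIntermediateReduction Y G')
    (T : Set ι) (hT : G.IsSiphon T) :
    (T ∩ ↑G'.species = ∅ ∨ G'.IsSiphon (T ∩ ↑G'.species)) ∧
    (T ∩ ↑G'.species = ∅ →
      (T ∩ ((↑G.species \ ↑Y) \ (↑G'.species : Set ι))).Nonempty) := by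
  have hsi := hT.2.2
  constructor
  · by_cases hE : T ∩ ↑G'.species = ∅
    · exact Or.inl hE
    · right
      refine ⟨Set.nonempty_iff_ne_empty.mpr hE, Set.inter_subset_right, ?_⟩
      intro p hp hprod
      obtain ⟨_, _, _, _, _, L, _, hchain⟩ := (hred p).mp hp
      obtain ⟨i, hiT, hipos⟩ :=
        chain_siphon_aux G T hsi L p.1 p.2 hchain ⟨hprod.choose, hprod.choose_spec.1.1,
          hprod.choose_spec.2⟩
      refine ⟨i, ⟨hiT, ?_⟩, hipos⟩
      exact G'.complexes_supp p.1 (G'.react_mem_fst p hp) i (ne_of_gt hipos)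
  · intro h
    obtain ⟨i, hiT⟩ := hT.1
    have hiS : i ∈ G.species := hT.2.1 hiT
    have hnotS' : ∀ j ∈ T, j ∉ G'.species := by
      intro j hjT hjS'
      have hm : j ∈ T ∩ (↑G'.species : Set ι) := ⟨hjT, hjS'⟩
      rw [h] at hm
      exact hm
    by_cases hiY : i ∈ Y
    · obtain ⟨y, hy, y', hy', hoff, _, ⟨L, _, hchain⟩, _⟩ := hY.2.2.2 i hiY
      obtain ⟨j, hjT, hjpos⟩ := chain_siphon_aux G T hsi L y (Pi.single i 1) hchain
        ⟨i, hiT, by simp [Pi.single_eq_same]⟩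
      have hjS : j ∈ G.species := G.complexes_supp y hy j (ne_of_gt hjpos)
      have hjY : j ∉ Y := fun hjY => by
        have := hoff j hjY; exact absurd this (ne_of_gt hjpos)
      exact ⟨j, hjT, ⟨⟨hjS, hjY⟩, hnotS' j hjT⟩⟩
    · exact ⟨i, hiT, ⟨⟨hiS, hiY⟩, hnotS' i hiT⟩⟩
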